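/- Let R be a division ring, X, Y : Set α, and A : Matrix X Y R. For I ⊆ Y, call I independent if the columns of A indexed by I are linearly independent over R (as rows of Aᵀ restricted to Y ↓∩ I). Then this independence predicate satisfies the augmentation property: for all I, J ⊆ Y with I independent but not maximal among independent sets, and J maximal among independent sets, there exists x ∈ J \ I such that I ∪ {x} is independent. -/

import Mathlib

open scoped Set.Notation

/-- The independence predicate of the vector matroid of a matrix `A : Matrix X Y R`:
a set `I` is independent iff `I ⊆ Y` and the columns of `A` indexed by `I` are
linearly independent over `R`. -/
def Matrix.IndepCols {α R : Type*} {X Y : Set α} [Semiring R]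
    (A : Matrix X Y R) (I : Set α) : Prop :=
  I ⊆ Y ∧ LinearIndependent R (fun i : (Y ↓∩ I) => A.transpose i.val)

lemma preimage_insert_eq {α : Type*} {Y I : Set α} {y : α} (hy : y ∈ Y) :
    (Y ↓∩ insert y I) = insert (⟨y, hy⟩ : Y) (Y ↓∩ I) := by
  ext a
  simp [Subtype.ext_iff]

lemma indepCols_mono {α R : Type*} {X Y : Set α} [Semiring R]
    {A : Matrix X Y R} {I J : Set α} (h : I ⊆ J) (hJ : A.IndepCols J) :
    A.IndepCols I := by
  refine ⟨h.trans hJ.1, ?_⟩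
  exact hJ.2.comp (Set.inclusion (Set.preimage_mono h))
    (Set.inclusion_injective (Set.preimage_mono h))

theorem linearIndependent_insert' {ι K V : Type*} [DivisionRing K] [AddCommGroup V]
    [Module K V] {s : Set ι} {a : ι} {f : ι → V} (has : a ∉ s) :
    LinearIndependent K (fun x : (insert a s : Set ι) => f x) ↔
      LinearIndependent K (fun x : s => f x) ∧ f a ∉ Submodule.span K (f '' s) :=
  linearIndepOn_insert has

/-- The column-independence predicate satisfies the augmentation property:
if `I` is independent but not maximal and `J` is maximal independent, then
some `x ∈ J \ I` can be added to `I` keeping it independent. -/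
theorem Matrix.indepCols_aug {α R : Type*} {X Y : Set α} [DivisionRing R]
    (A : Matrix X Y R) (I J : Set α) (hI : A.IndepCols I)
    (hInmax : ¬ Maximal A.IndepCols I) (hJmax : Maximal A.IndepCols J) :
    ∃ x ∈ J \ I, A.IndepCols (insert x I) := by
  by_contra hcon
  push_neg at hcon
  set v : Y → (X → R) := fun y => A.transpose y with hv
  -- Step 1: find y with `insert y I` independent, y ∉ I
  obtain ⟨I', hI', hII', hI'I⟩ := by
    simpa [Maximal, hI] using hInmax
  obtain ⟨y, hyI', hyI⟩ := Set.not_subset.mp hI'I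
  have hyY : y ∈ Y := hI'.1 hyI'
  have hins : A.IndepCols (insert y I) :=
    indepCols_mono (Set.insert_subset hyI' hII') hI'
  -- Step 2: v y ∉ span of columns of I
  have hyI2 : (⟨y, hyY⟩ : Y) ∉ (Y ↓∩ I) := by simpa using hyI
  have h2 := hins.2
  rw [show (Y ↓∩ insert y I) = insert (⟨y, hyY⟩ : Y) (Y ↓∩ I) from
    preimage_insert_eq hyY, linearIndependent_insert' (f := fun y : Y => A.transpose y) hyI2] at h2
  obtain ⟨-, hyspan⟩ := h2
  -- Step 3: every column of J lies in span of columns of I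
  have hspan : ∀ x : Y, (x : α) ∈ J → v x ∈ Submodule.span R (v '' (Y ↓∩ I)) := by
    rintro ⟨x, hxY⟩ hxJ
    by_cases hxI : x ∈ I
    · exact Submodule.subset_span ⟨⟨x, hxY⟩, hxI, rfl⟩
    · have hni := hcon x ⟨hxJ, hxI⟩
      have hxI2 : (⟨x, hxY⟩ : Y) ∉ (Y ↓∩ I) := by simpa using hxI
      by_contra hns
      exact hni ⟨Set.insert_subset hxY hI.1, by
        rw [show (Y ↓∩ insert x I) = insert (⟨x, hxY⟩ : Y) (Y ↓∩ I) from
          preimage_insert_eq hxY, linearIndependent_insert' (f := fun y : Y => A.transpose y) hxI2]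
        exact ⟨hI.2, hns⟩⟩
  have hspanle : Submodule.span R (v '' (Y ↓∩ J)) ≤ Submodule.span R (v '' (Y ↓∩ I)) := by
    rw [Submodule.span_le]
    rintro _ ⟨x, hxJ, rfl⟩
    exact hspan x hxJ
  -- Step 4: y ∉ J, and insert y J is independent, contradicting maximality of J
  have hyJ : y ∉ J := fun hyJ => hyspan (hspan ⟨y, hyY⟩ hyJ)
  have hyJ2 : (⟨y, hyY⟩ : Y) ∉ (Y ↓∩ J) := by simpa using hyJ
  have hinsJ : A.IndepCols (insert y J) := by
    refine ⟨Set.insert_subset hyY hJmax.1.1, ?_⟩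
    rw [show (Y ↓∩ insert y J) = insert (⟨y, hyY⟩ : Y) (Y ↓∩ J) from
      preimage_insert_eq hyY, linearIndependent_insert' (f := fun y : Y => A.transpose y) hyJ2]
    exact ⟨hJmax.1.2, fun h => hyspan (hspanle h)⟩
  exact hyJ (hJmax.2 hinsJ (Set.subset_insert y J) (Set.mem_insert y J))
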